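/- Let α ≥ 0 and β > 0, let W = μ + ω with μ a finite signed Borel measure on ℝ and ω ∈ L^∞(ℝ), and let ε ∈ ℝ. Then for every φ ∈ H¹(ℝ), E_ε(φ) ≥ (3/4)‖φ'‖_{L²}² − ‖φ‖_{L²}² · ((α/2)‖φ‖_{L²}² + |ε| · |μ|(ℝ) + β)² − |ε| · ‖ω‖_{L^∞} · ‖φ‖_{L²}², where |μ|(ℝ) denotes the total variation of μ. In particular e_ε > −∞. -/

import Mathlib

open MeasureTheory Real Filter

noncomputable section

/-- An element of the Sobolev space `H¹(ℝ)` of complex-valued functions, represented by its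
continuous representative together with its (weak) derivative: the function and the derivative
are square integrable, and the function is the indefinite integral of its derivative. -/
structure H1 where
  toFun : ℝ → ℂ
  deriv : ℝ → ℂ
  memL2 : MemLp toFun 2 (volume : Measure ℝ)
  deriv_memL2 : MemLp deriv 2 (volume : Measure ℝ)
  integral_deriv : ∀ x : ℝ, toFun x = toFun 0 + ∫ t in (0:ℝ)..x, deriv t

/-- The `L²(ℝ)` norm. -/
def L2norm (f : ℝ → ℂ) : ℝ := (eLpNorm f 2 (volume : Measure ℝ)).toReal

/-- The one-dimensional Pekar functional
`E₀(φ) = ∫ |φ′|² − (α/2) ∫ |φ|⁴ − β |φ(0)|²`. -/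
def pekarE0 (α β : ℝ) (φ : H1) : ℝ :=
  (∫ x : ℝ, ‖φ.deriv x‖ ^ 2) - α / 2 * (∫ x : ℝ, ‖φ.toFun x‖ ^ 4) - β * ‖φ.toFun 0‖ ^ 2

/-- The ground-state energy `e₀ = inf {E₀(φ) : ‖φ‖₂ = 1}`. -/
def groundE0 (α β : ℝ) : ℝ :=
  sInf { r : ℝ | ∃ φ : H1, L2norm φ.toFun = 1 ∧ pekarE0 α β φ = r }


/-- The integral `∫ f dW` of `f` against `W = μ + ω`, where `μ` is a finite signed Borel
measure on `ℝ` and `ω ∈ L^∞(ℝ)`: it equals `∫ f dμ⁺ − ∫ f dμ⁻ + ∫ ω f dx`. -/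
def Wint (μ : MeasureTheory.SignedMeasure ℝ) (ω : ℝ → ℝ) (f : ℝ → ℝ) : ℝ :=
  (∫ x, f x ∂μ.toJordanDecomposition.posPart) -
    (∫ x, f x ∂μ.toJordanDecomposition.negPart) + ∫ x : ℝ, ω x * f x

/-- The perturbed Pekar functional `E_ε(φ) = E₀(φ) − ε ∫ W |φ|²`. -/
def pekarEps (α β : ℝ) (μ : MeasureTheory.SignedMeasure ℝ) (ω : ℝ → ℝ) (ε : ℝ) (φ : H1) : ℝ :=
  pekarE0 α β φ - ε * Wint μ ω (fun x => ‖φ.toFun x‖ ^ 2)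

/-- The perturbed ground-state energy `e_ε = inf {E_ε(φ) : ‖φ‖₂ = 1}`. -/
def groundEps (α β : ℝ) (μ : MeasureTheory.SignedMeasure ℝ) (ω : ℝ → ℝ) (ε : ℝ) : ℝ :=
  sInf { r : ℝ | ∃ φ : H1, L2norm φ.toFun = 1 ∧ pekarEps α β μ ω ε φ = r }


open scoped ENNReal NNReal

lemma l2sq {f : ℝ → ℂ} (hf : MemLp f 2 (volume : Measure ℝ)) :
    ((eLpNorm f 2 (volume : Measure ℝ)).toReal) ^ 2 = ∫ x : ℝ, ‖f x‖ ^ 2 := by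
  have h := hf.eLpNorm_eq_integral_rpow_norm (by norm_num) (by norm_num)
  rw [h, ENNReal.toReal_ofReal (by positivity)]
  have htr : (2 : ℝ≥0∞).toReal = (2 : ℝ) := by norm_num
  rw [htr]
  have hI : 0 ≤ ∫ x : ℝ, ‖f x‖ ^ (2:ℝ) := by
    apply integral_nonneg; intro x; positivity
  rw [← Real.rpow_natCast (_ ^ (2:ℝ)⁻¹) 2, ← Real.rpow_mul hI]
  norm_num

lemma amgm_aux {P a b : ℝ} (hP : ∀ l : ℝ, 0 < l → 2 * P ≤ l * b ^ 2 + a ^ 2 / l)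
    (ha : 0 ≤ a) (hb : 0 ≤ b) : P ≤ b * a := by
  apply le_of_forall_pos_le_add
  intro ε hε
  rcases eq_or_lt_of_le hb with hb0 | hbpos
  · have hD : (0:ℝ) < a ^ 2 / (2 * ε) + 1 := by positivity
    have h := hP _ hD
    rw [← hb0] at h
    have key : a ^ 2 / (a ^ 2 / (2 * ε) + 1) ≤ 2 * ε := by
      rw [div_le_iff₀ hD]
      have he : 2 * ε * (a ^ 2 / (2 * ε) + 1) = a ^ 2 + 2 * ε := by
        rw [mul_add, mul_one, mul_comm (2 * ε), div_mul_cancel₀ _ (ne_of_gt (by positivity))]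
      rw [he]; linarith
    rw [← hb0]
    nlinarith
  · have hb' : b ≠ 0 := ne_of_gt hbpos
    have hl : (0:ℝ) < (a * b + ε) / b ^ 2 := by positivity
    have h := hP _ hl
    have hden : (0:ℝ) < a * b + ε := add_pos_of_nonneg_of_pos (mul_nonneg ha hbpos.le) hε
    have h1 : (a * b + ε) / b ^ 2 * b ^ 2 = a * b + ε :=
      div_mul_cancel₀ _ (pow_ne_zero 2 hb')
    have h2 : a ^ 2 / ((a * b + ε) / b ^ 2) = a ^ 2 * b ^ 2 / (a * b + ε) :=
      div_div_eq_mul_div _ _ _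
    have h3 : a ^ 2 * b ^ 2 / (a * b + ε) ≤ a * b := by
      rw [div_le_iff₀ hden]
      nlinarith [mul_nonneg (mul_nonneg ha hbpos.le) hε.le]
    linarith

lemma sq_bound_aux {r ρ : ℝ → ℝ} (hr : Continuous r) (hr0 : ∀ t, 0 ≤ r t)
    (hρ0 : ∀ t, 0 ≤ ρ t) (hρint : ∀ a b, IntervalIntegrable ρ volume a b)
    (hrρint : ∀ a b, IntervalIntegrable (fun t => r t * ρ t) volume a b)
    (hlip : ∀ a b, a ≤ b → |r b - r a| ≤ ∫ t in a..b, ρ t)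
    {x y : ℝ} (hxy : x ≤ y) :
    |r y ^ 2 - r x ^ 2| ≤ 2 * ∫ t in x..y, r t * ρ t := by
  have key : ∀ δ : ℝ, 0 < δ →
      |r y ^ 2 - r x ^ 2| ≤ (2 * ∫ t in x..y, r t * ρ t) + δ * ∫ t in x..y, ρ t := by
    intro δ hδ
    set S : Set ℝ := {z | z ∈ Set.Icc x y ∧
      |r z ^ 2 - r x ^ 2| ≤ (2 * ∫ t in x..z, r t * ρ t) + δ * ∫ t in x..z, ρ t} with hS
    have hSclosed : IsClosed S := by
      have h1 : Continuous fun z => |r z ^ 2 - r x ^ 2| :=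
        ((hr.pow 2).sub continuous_const).abs
      have h2 : Continuous fun z => (2 * ∫ t in x..z, r t * ρ t) + δ * ∫ t in x..z, ρ t :=
        (continuous_const.mul (intervalIntegral.continuous_primitive hrρint x)).add
          (continuous_const.mul (intervalIntegral.continuous_primitive hρint x))
      exact (isClosed_Icc.inter (isClosed_le h1 h2) : IsClosed (Set.Icc x y ∩ _))
    have hxS : x ∈ S := by
      constructor
      · exact ⟨le_refl x, hxy⟩
      · simp [intervalIntegral.integral_same]
    have hne : S.Nonempty := ⟨x, hxS⟩
    have hbdd : BddAbove S := ⟨y, fun z hz => hz.1.2⟩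
    set c := sSup S with hc
    have hcS : c ∈ S := hSclosed.csSup_mem hne hbdd
    have hxc : x ≤ c := hcS.1.1
    have hcy : c ≤ y := hcS.1.2
    rcases eq_or_lt_of_le hcy with heq | hlt
    · rw [← heq]; exact hcS.2
    · exfalso
      obtain ⟨η, hη, hball⟩ := Metric.continuousAt_iff.mp (hr.continuousAt (x := c)) (δ/4)
        (by positivity)
      set w := min y (c + η/2) with hw
      have hcw : c < w := lt_min hlt (by linarith)
      have hwy : w ≤ y := min_le_left _ _
      have hclose : ∀ t ∈ Set.Icc c w, |r t - r c| ≤ δ/4 := by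
        intro t ht
        have hdist : dist t c < η := by
          rw [Real.dist_eq, abs_of_nonneg (by linarith [ht.1])]
          have : t ≤ c + η/2 := le_trans ht.2 (min_le_right _ _)
          linarith
        have := hball hdist
        rw [Real.dist_eq] at this
        linarith
      -- estimate on [c, w]
      have hstep : |r w ^ 2 - r c ^ 2| ≤
          (2 * ∫ t in c..w, r t * ρ t) + δ * ∫ t in c..w, ρ t := by
        have h1 : |r w - r c| ≤ ∫ t in c..w, ρ t := hlip c w hcw.le
        have hsum : 0 ≤ r w + r c := by linarith [hr0 w, hr0 c]
        have e1 : |r w ^ 2 - r c ^ 2| = |r w - r c| * (r w + r c) := by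
          rw [show r w ^ 2 - r c ^ 2 = (r w - r c) * (r w + r c) by ring, abs_mul,
            abs_of_nonneg hsum]
        have e2 : |r w - r c| * (r w + r c) ≤ (∫ t in c..w, ρ t) * (r w + r c) :=
          mul_le_mul_of_nonneg_right h1 hsum
        have e3 : (∫ t in c..w, ρ t) * (r w + r c) = ∫ t in c..w, ρ t * (r w + r c) := by
          rw [intervalIntegral.integral_mul_const]
        have e4 : (∫ t in c..w, ρ t * (r w + r c)) ≤
            ∫ t in c..w, (2 * (r t * ρ t) + δ * ρ t) := by
          apply intervalIntegral.integral_mono_on hcw.le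
          · exact (hρint c w).mul_const _
          · exact ((hrρint c w).const_mul 2).add ((hρint c w).const_mul δ)
          · intro t ht
            have hb1 := abs_le.mp (hclose t ht)
            have hb2 := abs_le.mp (hclose w ⟨hcw.le, le_refl w⟩)
            have : r w + r c ≤ 2 * r t + δ := by linarith
            nlinarith [hρ0 t]
        have e5 : (∫ t in c..w, (2 * (r t * ρ t) + δ * ρ t)) =
            (2 * ∫ t in c..w, r t * ρ t) + δ * ∫ t in c..w, ρ t := by
          rw [intervalIntegral.integral_add ((hrρint c w).const_mul 2)
            ((hρint c w).const_mul δ), intervalIntegral.integral_const_mul,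
            intervalIntegral.integral_const_mul]
        calc |r w ^ 2 - r c ^ 2| = |r w - r c| * (r w + r c) := e1
          _ ≤ (∫ t in c..w, ρ t) * (r w + r c) := e2
          _ = ∫ t in c..w, ρ t * (r w + r c) := e3
          _ ≤ ∫ t in c..w, (2 * (r t * ρ t) + δ * ρ t) := e4
          _ = _ := e5
      have hwS : w ∈ S := by
        constructor
        · exact ⟨le_trans hxc hcw.le, hwy⟩
        · have hadd1 : (∫ t in x..c, r t * ρ t) + (∫ t in c..w, r t * ρ t)
              = ∫ t in x..w, r t * ρ t :=
            intervalIntegral.integral_add_adjacent_intervals (hrρint x c) (hrρint c w)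
          have hadd2 : (∫ t in x..c, ρ t) + (∫ t in c..w, ρ t) = ∫ t in x..w, ρ t :=
            intervalIntegral.integral_add_adjacent_intervals (hρint x c) (hρint c w)
          have htr : |r w ^ 2 - r x ^ 2| ≤ |r w ^ 2 - r c ^ 2| + |r c ^ 2 - r x ^ 2| := by
            calc |r w ^ 2 - r x ^ 2| = |(r w ^ 2 - r c ^ 2) + (r c ^ 2 - r x ^ 2)| := by ring_nf
              _ ≤ _ := abs_add_le _ _
          have h2 := hcS.2
          calc |r w ^ 2 - r x ^ 2| ≤ |r w ^ 2 - r c ^ 2| + |r c ^ 2 - r x ^ 2| := htr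
            _ ≤ ((2 * ∫ t in c..w, r t * ρ t) + δ * ∫ t in c..w, ρ t) +
                ((2 * ∫ t in x..c, r t * ρ t) + δ * ∫ t in x..c, ρ t) := by linarith
            _ = (2 * ∫ t in x..w, r t * ρ t) + δ * ∫ t in x..w, ρ t := by
                rw [← hadd1, ← hadd2]; ring
      have : w ≤ c := le_csSup hbdd hwS
      linarith
  have hρnn : 0 ≤ ∫ t in x..y, ρ t :=
    intervalIntegral.integral_nonneg hxy (fun t _ => hρ0 t)
  by_contra hcon
  push_neg at hcon
  set K := ∫ t in x..y, ρ t with hK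
  set ε := |r y ^ 2 - r x ^ 2| - 2 * ∫ t in x..y, r t * ρ t with hε
  have hεpos : 0 < ε := by simp only [hε]; linarith
  have h := key (ε / (K + 1)) (by positivity)
  have h2 : ε ≤ ε / (K + 1) * K := by simp only [hε]; linarith
  have h3 : ε / (K + 1) * K < ε := by
    rw [div_mul_eq_mul_div, div_lt_iff₀ (by linarith)]
    nlinarith
  linarith

lemma H1.deriv_intervalIntegrable (φ : H1) (a b : ℝ) :
    IntervalIntegrable φ.deriv volume a b := by
  rw [intervalIntegrable_iff]
  have hfin : volume (Set.uIoc a b) < ⊤ := by rw [Set.uIoc]; exact measure_Ioc_lt_top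
  haveI : IsFiniteMeasure (volume.restrict (Set.uIoc a b)) :=
    ⟨by rwa [Measure.restrict_apply_univ]⟩
  exact (φ.deriv_memL2.restrict _).integrable (by norm_num)

lemma H1.continuous_toFun (φ : H1) : Continuous φ.toFun := by
  have h : Continuous fun x => φ.toFun 0 + ∫ t in (0:ℝ)..x, φ.deriv t :=
    continuous_const.add (intervalIntegral.continuous_primitive φ.deriv_intervalIntegrable 0)
  have he : φ.toFun = fun x => φ.toFun 0 + ∫ t in (0:ℝ)..x, φ.deriv t :=
    funext φ.integral_deriv
  rw [he]; exact h

lemma H1.sq_integrable (φ : H1) : Integrable (fun x => ‖φ.toFun x‖ ^ 2) (volume : Measure ℝ) :=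
  (memLp_two_iff_integrable_sq_norm φ.memL2.aestronglyMeasurable).mp φ.memL2

lemma H1.deriv_sq_integrable (φ : H1) :
    Integrable (fun x => ‖φ.deriv x‖ ^ 2) (volume : Measure ℝ) :=
  (memLp_two_iff_integrable_sq_norm φ.deriv_memL2.aestronglyMeasurable).mp φ.deriv_memL2

lemma H1.mul_integrable (φ : H1) :
    Integrable (fun t => ‖φ.toFun t‖ * ‖φ.deriv t‖) (volume : Measure ℝ) := by
  refine Integrable.mono' (φ.sq_integrable.add φ.deriv_sq_integrable) ?_ ?_
  · exact φ.continuous_toFun.norm.aestronglyMeasurable.mul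
      φ.deriv_memL2.aestronglyMeasurable.norm
  · filter_upwards with t
    rw [Real.norm_eq_abs, abs_of_nonneg (by positivity)]
    simp only [Pi.add_apply]
    nlinarith [sq_nonneg (‖φ.toFun t‖ - ‖φ.deriv t‖)]

lemma H1.small_values (φ : H1) {δ : ℝ} (hδ : 0 < δ) {s : Set ℝ} (hs : MeasurableSet s)
    (hvol : volume s = ⊤) : ∃ z ∈ s, ‖φ.toFun z‖ < δ := by
  by_contra hno
  push_neg at hno
  have hconst : IntegrableOn (fun _ => δ ^ 2 : ℝ → ℝ) s volume := by
    refine Integrable.mono (φ.sq_integrable.restrict (s := s)) aestronglyMeasurable_const ?_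
    rw [ae_restrict_iff' hs]
    filter_upwards with z hz
    have h := hno z hz
    rw [Real.norm_eq_abs, Real.norm_eq_abs, abs_of_nonneg (by positivity),
      abs_of_nonneg (by positivity)]
    nlinarith [norm_nonneg (φ.toFun z)]
  rcases (integrableOn_const_iff).mp hconst with h | h
  · have h' := enorm_eq_zero.mp h; nlinarith
  · rw [hvol] at h; exact absurd h (lt_irrefl _)

lemma H1.sup_sq_le (φ : H1) (x₀ : ℝ) :
    ‖φ.toFun x₀‖ ^ 2 ≤ ∫ t : ℝ, ‖φ.toFun t‖ * ‖φ.deriv t‖ := by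
  set r : ℝ → ℝ := fun t => ‖φ.toFun t‖ with hr_def
  set ρ : ℝ → ℝ := fun t => ‖φ.deriv t‖ with hρ_def
  have hr : Continuous r := φ.continuous_toFun.norm
  have hr0 : ∀ t, 0 ≤ r t := fun t => norm_nonneg _
  have hρ0 : ∀ t, 0 ≤ ρ t := fun t => norm_nonneg _
  have hdii := φ.deriv_intervalIntegrable
  have hρint : ∀ a b, IntervalIntegrable ρ volume a b := fun a b => (hdii a b).norm
  have hrρI : Integrable (fun t => r t * ρ t) volume := φ.mul_integrable
  have hrρint : ∀ a b, IntervalIntegrable (fun t => r t * ρ t) volume a b :=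
    fun a b => hrρI.intervalIntegrable
  have hlip : ∀ a b, a ≤ b → |r b - r a| ≤ ∫ t in a..b, ρ t := by
    intro a b hab
    have hdiff : φ.toFun b - φ.toFun a = ∫ t in a..b, φ.deriv t := by
      rw [φ.integral_deriv a, φ.integral_deriv b,
        ← intervalIntegral.integral_interval_sub_left (hdii 0 b) (hdii 0 a)]
      ring
    calc |r b - r a| ≤ ‖φ.toFun b - φ.toFun a‖ := abs_norm_sub_norm_le _ _
      _ = ‖∫ t in a..b, φ.deriv t‖ := by rw [hdiff]
      _ ≤ ∫ t in a..b, ‖φ.deriv t‖ := intervalIntegral.norm_integral_le_integral_norm hab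
  set P := ∫ t : ℝ, r t * ρ t with hP
  have hseg : ∀ u v, u ≤ v → (∫ t in u..v, r t * ρ t) ≤ P := by
    intro u v huv
    rw [intervalIntegral.integral_of_le huv]
    exact setIntegral_le_integral hrρI (ae_of_all _ fun t => mul_nonneg (hr0 t) (hρ0 t))
  have key : ∀ δ : ℝ, 0 < δ → r x₀ ^ 2 ≤ δ ^ 2 + P := by
    intro δ hδ
    obtain ⟨z, hz1, hz2⟩ := φ.small_values hδ measurableSet_Ici (Real.volume_Ici (a := x₀))
    obtain ⟨u, hu1, hu2⟩ := φ.small_values hδ measurableSet_Iic (Real.volume_Iic (a := x₀))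
    rw [Set.mem_Ici] at hz1
    rw [Set.mem_Iic] at hu1
    have h1 := sq_bound_aux hr hr0 hρ0 hρint hrρint hlip hu1
    have h2 := sq_bound_aux hr hr0 hρ0 hρint hrρint hlip hz1
    have ha1 := (abs_le.mp h1).2
    have ha2 := (abs_le.mp h2).1
    have hadd := intervalIntegral.integral_add_adjacent_intervals (hrρint u x₀) (hrρint x₀ z)
    have hs := hseg u z (le_trans hu1 hz1)
    have hu2' : r u ^ 2 ≤ δ ^ 2 := by nlinarith [hr0 u]
    have hz2' : r z ^ 2 ≤ δ ^ 2 := by nlinarith [hr0 z]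
    linarith
  apply le_of_forall_pos_le_add
  intro ε hε
  have h := key (Real.sqrt ε) (Real.sqrt_pos.mpr hε)
  rw [Real.sq_sqrt hε.le] at h
  linarith


lemma H1.int_mul_le (φ : H1) :
    (∫ t : ℝ, ‖φ.toFun t‖ * ‖φ.deriv t‖) ≤ L2norm φ.toFun * L2norm φ.deriv := by
  apply amgm_aux (a := L2norm φ.deriv) (b := L2norm φ.toFun)
  · intro l hl
    have hb2 : (L2norm φ.toFun) ^ 2 = ∫ x : ℝ, ‖φ.toFun x‖ ^ 2 := l2sq φ.memL2
    have ha2 : (L2norm φ.deriv) ^ 2 = ∫ x : ℝ, ‖φ.deriv x‖ ^ 2 := l2sq φ.deriv_memL2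
    rw [hb2, ha2]
    have hint : Integrable (fun t => l * ‖φ.toFun t‖ ^ 2 + ‖φ.deriv t‖ ^ 2 / l)
        (volume : Measure ℝ) :=
      (φ.sq_integrable.const_mul l).add (φ.deriv_sq_integrable.div_const l)
    have h2 : (∫ t : ℝ, (l * ‖φ.toFun t‖ ^ 2 + ‖φ.deriv t‖ ^ 2 / l))
        = l * (∫ x : ℝ, ‖φ.toFun x‖ ^ 2) + (∫ x : ℝ, ‖φ.deriv x‖ ^ 2) / l := by
      rw [integral_add (φ.sq_integrable.const_mul l) (φ.deriv_sq_integrable.div_const l),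
        integral_const_mul, integral_div]
    rw [← h2, show (2 : ℝ) * ∫ t : ℝ, ‖φ.toFun t‖ * ‖φ.deriv t‖
        = ∫ t : ℝ, 2 * (‖φ.toFun t‖ * ‖φ.deriv t‖) from (integral_const_mul 2 _).symm]
    apply integral_mono (φ.mul_integrable.const_mul 2) hint
    intro t
    have hc : ‖φ.deriv t‖ ^ 2 / l * l = ‖φ.deriv t‖ ^ 2 := div_mul_cancel₀ _ hl.ne'
    nlinarith [sq_nonneg (l * ‖φ.toFun t‖ - ‖φ.deriv t‖), hl,
      mul_nonneg (norm_nonneg (φ.toFun t)) (norm_nonneg (φ.deriv t))]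
  · exact ENNReal.toReal_nonneg
  · exact ENNReal.toReal_nonneg


/-- **Coercivity lower bound for the perturbed functional:** for every `φ ∈ H¹(ℝ)`,
`E_ε(φ) ≥ (3/4)‖φ′‖₂² − ‖φ‖₂²((α/2)‖φ‖₂² + |ε||μ|(ℝ) + β)² − |ε|‖ω‖_∞‖φ‖₂²`;
in particular `e_ε > −∞`. -/
theorem pekarEps_lower_bound (α β : ℝ) (hα : 0 ≤ α) (hβ : 0 < β)
    (μ : MeasureTheory.SignedMeasure ℝ) (ω : ℝ → ℝ) (hω : MemLp ω ⊤ (volume : Measure ℝ))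
    (ε : ℝ) :
    (∀ φ : H1, pekarEps α β μ ω ε φ ≥
        3 / 4 * L2norm φ.deriv ^ 2 -
          L2norm φ.toFun ^ 2 *
            (α / 2 * L2norm φ.toFun ^ 2 + |ε| * (μ.totalVariation Set.univ).toReal + β) ^ 2 -
          |ε| * (eLpNorm ω ⊤ (volume : Measure ℝ)).toReal * L2norm φ.toFun ^ 2) ∧
      BddBelow { r : ℝ | ∃ φ : H1, L2norm φ.toFun = 1 ∧ pekarEps α β μ ω ε φ = r } := by
  set Nω := (eLpNorm ω ⊤ (volume : Measure ℝ)).toReal with hNω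
  have hNω0 : 0 ≤ Nω := ENNReal.toReal_nonneg
  set TV := (μ.totalVariation Set.univ).toReal with hTVdef
  have hTV0 : 0 ≤ TV := ENNReal.toReal_nonneg
  have hω_ae : ∀ᵐ x : ℝ, ‖ω x‖ ≤ Nω := by
    have htop : eLpNormEssSup ω (volume : Measure ℝ) ≠ ⊤ := by
      rw [← eLpNorm_exponent_top]; exact hω.2.ne
    filter_upwards [MeasureTheory.ae_le_eLpNormEssSup (f := ω) (μ := (volume : Measure ℝ))]
      with x hx
    have h1 : ((‖ω x‖₊ : ℝ≥0∞)).toReal ≤ (eLpNormEssSup ω (volume : Measure ℝ)).toReal :=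
      ENNReal.toReal_mono htop hx
    simpa [hNω, eLpNorm_exponent_top, coe_nnnorm] using h1
  have main : ∀ φ : H1, pekarEps α β μ ω ε φ ≥
      3 / 4 * L2norm φ.deriv ^ 2 -
        L2norm φ.toFun ^ 2 *
          (α / 2 * L2norm φ.toFun ^ 2 + |ε| * TV + β) ^ 2 -
        |ε| * Nω * L2norm φ.toFun ^ 2 := by
    intro φ
    simp only [pekarEps, pekarE0]
    set b := L2norm φ.toFun with hbdef
    set a := L2norm φ.deriv with hadef
    have hb0 : 0 ≤ b := ENNReal.toReal_nonneg
    have ha0 : 0 ≤ a := ENNReal.toReal_nonneg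
    have hb2 : b ^ 2 = ∫ x : ℝ, ‖φ.toFun x‖ ^ 2 := l2sq φ.memL2
    have ha2 : a ^ 2 = ∫ x : ℝ, ‖φ.deriv x‖ ^ 2 := l2sq φ.deriv_memL2
    set P := ∫ t : ℝ, ‖φ.toFun t‖ * ‖φ.deriv t‖ with hPdef
    have hsup : ∀ x, ‖φ.toFun x‖ ^ 2 ≤ P := φ.sup_sq_le
    have hP0 : 0 ≤ P := le_trans (sq_nonneg _) (hsup 0)
    have hPab : P ≤ b * a := φ.int_mul_le
    have h4 : (∫ x : ℝ, ‖φ.toFun x‖ ^ 4) ≤ P * b ^ 2 := by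
      have hm : (∫ x : ℝ, ‖φ.toFun x‖ ^ 4) ≤ ∫ x : ℝ, P * ‖φ.toFun x‖ ^ 2 := by
        apply integral_mono_of_nonneg (ae_of_all _ fun x => by positivity)
          (φ.sq_integrable.const_mul P)
        filter_upwards with x
        have h := hsup x
        nlinarith [norm_nonneg (φ.toFun x), sq_nonneg (‖φ.toFun x‖)]
      rw [integral_const_mul, ← hb2] at hm
      exact hm
    set TVp := (μ.toJordanDecomposition.posPart Set.univ).toReal with hTVp
    set TVn := (μ.toJordanDecomposition.negPart Set.univ).toReal with hTVn
    have hIpos_le : (∫ x, ‖φ.toFun x‖ ^ 2 ∂μ.toJordanDecomposition.posPart) ≤ P * TVp := by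
      have h : (∫ x, ‖φ.toFun x‖ ^ 2 ∂μ.toJordanDecomposition.posPart)
          ≤ ∫ _x, P ∂μ.toJordanDecomposition.posPart :=
        integral_mono_of_nonneg (ae_of_all _ fun x => by positivity) (integrable_const P)
          (ae_of_all _ hsup)
      rwa [integral_const, smul_eq_mul, mul_comm] at h
    have hIneg_le : (∫ x, ‖φ.toFun x‖ ^ 2 ∂μ.toJordanDecomposition.negPart) ≤ P * TVn := by
      have h : (∫ x, ‖φ.toFun x‖ ^ 2 ∂μ.toJordanDecomposition.negPart)
          ≤ ∫ _x, P ∂μ.toJordanDecomposition.negPart :=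
        integral_mono_of_nonneg (ae_of_all _ fun x => by positivity) (integrable_const P)
          (ae_of_all _ hsup)
      rwa [integral_const, smul_eq_mul, mul_comm] at h
    have hIpos_0 : 0 ≤ ∫ x, ‖φ.toFun x‖ ^ 2 ∂μ.toJordanDecomposition.posPart :=
      integral_nonneg fun x => by positivity
    have hIneg_0 : 0 ≤ ∫ x, ‖φ.toFun x‖ ^ 2 ∂μ.toJordanDecomposition.negPart :=
      integral_nonneg fun x => by positivity
    have hTVsum : TV = TVp + TVn := by
      rw [hTVdef, MeasureTheory.SignedMeasure.totalVariation, Measure.add_apply,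
        ENNReal.toReal_add (measure_ne_top _ _) (measure_ne_top _ _)]
    have hωint : Integrable (fun x => ω x * ‖φ.toFun x‖ ^ 2) (volume : Measure ℝ) :=
      φ.sq_integrable.bdd_mul hω.aestronglyMeasurable hω_ae
    have hωb : |∫ x : ℝ, ω x * ‖φ.toFun x‖ ^ 2| ≤ Nω * b ^ 2 := by
      have h1 : |∫ x : ℝ, ω x * ‖φ.toFun x‖ ^ 2| ≤ ∫ x : ℝ, |ω x * ‖φ.toFun x‖ ^ 2| := by
        have h := norm_integral_le_integral_norm (f := fun x => ω x * ‖φ.toFun x‖ ^ 2)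
          (μ := (volume : Measure ℝ))
        simp only [Real.norm_eq_abs] at h
        exact h
      have h2 : (∫ x : ℝ, |ω x * ‖φ.toFun x‖ ^ 2|) ≤ ∫ x : ℝ, Nω * ‖φ.toFun x‖ ^ 2 := by
        apply integral_mono_of_nonneg (ae_of_all _ fun x => abs_nonneg _)
          (φ.sq_integrable.const_mul Nω)
        filter_upwards [hω_ae] with x hx
        rw [abs_mul, abs_of_nonneg (by positivity : (0:ℝ) ≤ ‖φ.toFun x‖ ^ 2)]
        rw [Real.norm_eq_abs] at hx
        exact mul_le_mul_of_nonneg_right hx (by positivity)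
      rw [integral_const_mul, ← hb2] at h2
      linarith
    have hW : |Wint μ ω (fun x => ‖φ.toFun x‖ ^ 2)| ≤ P * (TVp + TVn) + Nω * b ^ 2 := by
      rw [Wint]
      calc |(∫ x, ‖φ.toFun x‖ ^ 2 ∂μ.toJordanDecomposition.posPart) -
              (∫ x, ‖φ.toFun x‖ ^ 2 ∂μ.toJordanDecomposition.negPart) +
              ∫ x : ℝ, ω x * ‖φ.toFun x‖ ^ 2|
          ≤ |(∫ x, ‖φ.toFun x‖ ^ 2 ∂μ.toJordanDecomposition.posPart) -
              (∫ x, ‖φ.toFun x‖ ^ 2 ∂μ.toJordanDecomposition.negPart)| +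
              |∫ x : ℝ, ω x * ‖φ.toFun x‖ ^ 2| := abs_add_le _ _
        _ ≤ (P * TVp + P * TVn) + Nω * b ^ 2 := by
            have hPTVp0 : 0 ≤ P * TVp := mul_nonneg hP0 ENNReal.toReal_nonneg
            have hPTVn0 : 0 ≤ P * TVn := mul_nonneg hP0 ENNReal.toReal_nonneg
            have habs : |(∫ x, ‖φ.toFun x‖ ^ 2 ∂μ.toJordanDecomposition.posPart) -
                (∫ x, ‖φ.toFun x‖ ^ 2 ∂μ.toJordanDecomposition.negPart)|
                ≤ P * TVp + P * TVn :=
              abs_le.mpr ⟨by linarith, by linarith⟩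
            linarith
        _ = P * (TVp + TVn) + Nω * b ^ 2 := by ring
    have hεW : ε * Wint μ ω (fun x => ‖φ.toFun x‖ ^ 2)
        ≤ |ε| * (P * (TVp + TVn) + Nω * b ^ 2) := by
      calc ε * Wint μ ω (fun x => ‖φ.toFun x‖ ^ 2)
          ≤ |ε * Wint μ ω (fun x => ‖φ.toFun x‖ ^ 2)| := le_abs_self _
        _ = |ε| * |Wint μ ω (fun x => ‖φ.toFun x‖ ^ 2)| := abs_mul _ _
        _ ≤ |ε| * (P * (TVp + TVn) + Nω * b ^ 2) :=
            mul_le_mul_of_nonneg_left hW (abs_nonneg ε)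
    obtain ⟨C, hC⟩ : ∃ C : ℝ, C = α / 2 * b ^ 2 + |ε| * TV + β := ⟨_, rfl⟩
    have hC0 : 0 ≤ C := by
      have h1 : 0 ≤ α / 2 * b ^ 2 := mul_nonneg (by linarith) (sq_nonneg b)
      have h2 : 0 ≤ |ε| * TV := mul_nonneg (abs_nonneg ε) hTV0
      rw [hC]; linarith
    have hquart : α / 2 * (∫ x : ℝ, ‖φ.toFun x‖ ^ 4) ≤ α / 2 * (P * b ^ 2) :=
      mul_le_mul_of_nonneg_left h4 (by linarith)
    have hbdry : β * ‖φ.toFun 0‖ ^ 2 ≤ β * P := mul_le_mul_of_nonneg_left (hsup 0) hβ.le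
    have hPC : P * C ≤ a ^ 2 / 4 + b ^ 2 * C ^ 2 := by
      have e1 : P * C ≤ b * a * C := mul_le_mul_of_nonneg_right hPab hC0
      nlinarith [sq_nonneg (a - 2 * b * C)]
    have hCexp : P * C = α / 2 * (P * b ^ 2) + |ε| * (P * (TVp + TVn)) + β * P := by
      rw [hC, hTVsum]; ring
    have hdist : |ε| * (P * (TVp + TVn) + Nω * b ^ 2)
        = |ε| * (P * (TVp + TVn)) + |ε| * Nω * b ^ 2 := by ring
    rw [← ha2, ← hC]
    linarith only [hεW, hquart, hbdry, hPC, hCexp, hdist]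
  refine ⟨main, ⟨-((α / 2 + |ε| * TV + β) ^ 2 + |ε| * Nω), ?_⟩⟩
  rintro r ⟨φ, hφ1, rfl⟩
  have h := main φ
  rw [hφ1] at h
  simp only [one_pow, mul_one] at h
  have ha0 : 0 ≤ L2norm φ.deriv ^ 2 := sq_nonneg _
  linarith
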